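/- arXiv:1508.02738 — 4 statements merged into one kernel-verified Lean document; each statement's English description precedes it below -/
import Mathlib

section
/- For integers n ≥ m ≥ 0 and δ ∈ {0,1}, the integral of P_{2m+δ}(y)·y^{2n+δ} over [-1,1] equals √π·Γ(2n+1+δ) / (2^{2n+δ}·Γ(n−m+1)·Γ(3/2+n+m+δ)). -/
open Polynomial MeasureTheory intervalIntegral

/-- Legendre polynomials via Bonnet recursion. -/
noncomputable def legendre : ℕ → Polynomial ℝ
  | 0 => 1
  | 1 => X
  | (n + 2) => C ((2 * (n:ℝ) + 3) / ((n:ℝ) + 2)) * X * legendre (n + 1)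
      - C (((n:ℝ) + 1) / ((n:ℝ) + 2)) * legendre n

lemma dup' (s : ℝ) (j : ℕ) (h : 2*s - 1 = (j:ℝ)) :
    Real.Gamma s * Real.Gamma (s + 1/2)
      = Real.Gamma ((j:ℝ)+1) * (2:ℝ)⁻¹ ^ j * Real.sqrt Real.pi := by
  have hga := Real.Gamma_mul_Gamma_add_half s
  rw [show (1:ℝ) - 2*s = -(j:ℝ) by linarith, Real.rpow_neg (by norm_num),
    Real.rpow_natCast, ← inv_pow, show 2*s = (j:ℝ)+1 by linarith] at hga
  exact hga

lemma dup2 (s : ℝ) (j : ℕ) (h : 2*s - 1 = (j:ℝ)) :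
    Real.sqrt Real.pi * Real.Gamma ((j:ℝ)+1)
      = (2:ℝ) ^ j * (Real.Gamma s * Real.Gamma (s + 1/2)) := by
  have h1 := dup' s j h
  have h2 : (2:ℝ)^j * (2:ℝ)⁻¹^j = 1 := by rw [← mul_pow]; norm_num
  linear_combination (-(2:ℝ)^j) * h1 - Real.Gamma ((j:ℝ)+1) * Real.sqrt Real.pi * h2

lemma alg (K P S G U V T : ℝ) (hK : K+2 ≠ 0) (hT : T ≠ 0) (hU : U ≠ 0) (hV : V ≠ 0)
    (hx : P-K ≠ 0) (hb : P+K+3 ≠ 0) :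
    (2*K+3)/(K+2) * (S * ((P+1)*G) / (T*2 * ((P-K)/2*U) * (((P+K)/2+3/2)*V)))
      - (K+1)/(K+2) * (S*G/(T * ((P-K)/2*U) * V))
    = S*G/(T * U * (((P+K)/2+3/2)*V)) := by
  field_simp
  ring

lemma key : ∀ k p : ℕ, k ≤ p → k % 2 = p % 2 →
    ∫ y in (-1:ℝ)..1, (legendre k).eval y * y ^ p
      = Real.sqrt Real.pi * Real.Gamma ((p:ℝ)+1) /
        (2 ^ p * Real.Gamma (((p:ℝ) - k)/2 + 1) * Real.Gamma (((p:ℝ) + k)/2 + 3/2)) := by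
  intro k
  induction k using Nat.strong_induction_on with
  | _ k ih =>
  match k with
  | 0 =>
    intro p _ hpar
    obtain ⟨q, rfl⟩ : ∃ q, p = 2*q := ⟨p/2, by omega⟩
    simp only [legendre, eval_one, one_mul]
    rw [integral_pow]
    have h1 : (-1:ℝ) ^ (2*q+1) = -1 := by
      rw [pow_succ, pow_mul]; norm_num
    have hg1 : Real.Gamma ((q:ℝ) + 1/2) > 0 := Real.Gamma_pos_of_pos (by positivity)
    have hg2 : Real.Gamma ((q:ℝ) + 1) > 0 := Real.Gamma_pos_of_pos (by positivity)
    have e1 : (((2*q:ℕ):ℝ) - ((0:ℕ):ℝ))/2 + 1 = (q:ℝ) + 1 := by push_cast; ring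
    have e2 : (((2*q:ℕ):ℝ) + ((0:ℕ):ℝ))/2 + 3/2 = ((q:ℝ) + 1/2) + 1 := by push_cast; ring
    have hkey := dup2 ((q:ℝ)+1/2) (2*q) (by push_cast; ring)
    rw [show ((2*q:ℕ):ℝ) + 1 = ((2*q:ℕ):ℝ) + 1 from rfl,
      show (q:ℝ)+1/2+1/2 = (q:ℝ)+1 by ring] at hkey
    rw [h1, e1, e2, Real.Gamma_add_one (s := (q:ℝ)+1/2) (by positivity), one_pow, hkey]
    have hq2 : ((2*q:ℕ):ℝ) + 1 = 2*((q:ℝ)+1/2) := by push_cast; ring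
    rw [hq2]
    have h2 : (2:ℝ)^(2*q) ≠ 0 := by positivity
    have h3 : ((q:ℝ)+1/2) ≠ 0 := by positivity
    field_simp
    ring
  | 1 =>
    intro p hp hpar
    obtain ⟨q, rfl⟩ : ∃ q, p = 2*q+1 := ⟨p/2, by omega⟩
    simp only [legendre, eval_X]
    have hy : ∀ y : ℝ, y * y ^ (2*q+1) = y ^ (2*q+2) := by intro y; ring
    simp_rw [hy]
    rw [integral_pow]
    have h1 : (-1:ℝ) ^ (2*q+2+1) = -1 := by
      rw [show 2*q+2+1 = 2*(q+1)+1 by ring, pow_succ, pow_mul]; norm_num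
    have hg1 : Real.Gamma ((q:ℝ) + 1) > 0 := Real.Gamma_pos_of_pos (by positivity)
    have hg2 : Real.Gamma ((q:ℝ) + 1 + 1/2) > 0 := Real.Gamma_pos_of_pos (by positivity)
    have e1 : (((2*q+1:ℕ):ℝ) - ((1:ℕ):ℝ))/2 + 1 = (q:ℝ) + 1 := by push_cast; ring
    have e2 : (((2*q+1:ℕ):ℝ) + ((1:ℕ):ℝ))/2 + 3/2 = ((q:ℝ) + 1 + 1/2) + 1 := by
      push_cast; ring
    have hkey := dup2 ((q:ℝ)+1) (2*q+1) (by push_cast; ring)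
    rw [show (q:ℝ)+1+1/2 = (q:ℝ)+1+1/2 from rfl] at hkey
    rw [h1, e1, e2, Real.Gamma_add_one (s := (q:ℝ)+1+1/2) (by positivity), one_pow]
    rw [show ((2*q+1:ℕ):ℝ) + 1 = ((2*q+1:ℕ):ℝ) + 1 from rfl, hkey]
    have hc : ((2*q+2:ℕ):ℝ) + 1 = 2*((q:ℝ)+1+1/2) := by push_cast; ring
    rw [hc]
    have h2 : (2:ℝ)^(2*q+1) ≠ 0 := by positivity
    have h3 : ((q:ℝ)+1+1/2) ≠ 0 := by positivity
    field_simp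
    ring
  | (k+2) =>
    intro p hp hpar
    have hk1 : k + 1 ≤ p + 1 := by omega
    have hk0 : k ≤ p := by omega
    have ih1 := ih (k+1) (by omega) (p+1) hk1 (by omega)
    have ih0 := ih k (by omega) p hk0 (by omega)
    simp only [legendre, eval_sub, eval_mul, eval_C, eval_X]
    have heq : ∀ y : ℝ, ((2*(k:ℝ)+3)/((k:ℝ)+2) * y * (legendre (k+1)).eval y
        - ((k:ℝ)+1)/((k:ℝ)+2) * (legendre k).eval y) * y ^ p
        = (2*(k:ℝ)+3)/((k:ℝ)+2) * ((legendre (k+1)).eval y * y ^ (p+1))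
          - ((k:ℝ)+1)/((k:ℝ)+2) * ((legendre k).eval y * y ^ p) := by
      intro y; ring
    simp_rw [heq]
    have hc1 : IntervalIntegrable (fun y => (legendre (k+1)).eval y * y ^ (p+1))
        volume (-1:ℝ) 1 :=
      ((legendre (k+1)).continuous_aeval.mul (continuous_pow _)).intervalIntegrable _ _
    have hc0 : IntervalIntegrable (fun y => (legendre k).eval y * y ^ p)
        volume (-1:ℝ) 1 :=
      ((legendre k).continuous_aeval.mul (continuous_pow _)).intervalIntegrable _ _
    rw [integral_sub (hc1.const_mul _) (hc0.const_mul _), intervalIntegral.integral_const_mul,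
      intervalIntegral.integral_const_mul, ih1, ih0]
    have hx : (((p:ℝ) - k)/2) > 0 := by
      have : (k:ℝ) + 2 ≤ p := by exact_mod_cast hp
      linarith
    have hb : (((p:ℝ) + k)/2 + 3/2) > 0 := by positivity
    have e1 : (((p+1:ℕ):ℝ) - ((k+1:ℕ):ℝ))/2 + 1 = ((p:ℝ) - k)/2 + 1 := by push_cast; ring
    have e2 : (((p+1:ℕ):ℝ) + ((k+1:ℕ):ℝ))/2 + 3/2 = (((p:ℝ) + k)/2 + 3/2) + 1 := by
      push_cast; ring
    have e3 : ((p+1:ℕ):ℝ) + 1 = ((p:ℝ) + 1) + 1 := by push_cast; ring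
    have e4 : (((p:ℝ)) - ((k+2:ℕ):ℝ))/2 + 1 = (((p:ℝ) - k)/2 - 1) + 1 := by push_cast; ring
    have e5 : (((p:ℝ)) + ((k+2:ℕ):ℝ))/2 + 3/2 = (((p:ℝ) + k)/2 + 3/2) + 1 := by
      push_cast; ring
    rw [e1, e2, e3, e4, e5, Real.Gamma_add_one (s := ((p:ℝ)+k)/2 + 3/2) hb.ne',
      Real.Gamma_add_one (s := (p:ℝ)+1) (by positivity),
      show (((p:ℝ) - k)/2 - 1) + 1 = ((p:ℝ) - k)/2 by ring,
      Real.Gamma_add_one (s := ((p:ℝ)-k)/2) hx.ne']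
    have hg1 : Real.Gamma (((p:ℝ) - k)/2) > 0 := Real.Gamma_pos_of_pos hx
    have hg2 : Real.Gamma (((p:ℝ) + k)/2 + 3/2) > 0 := Real.Gamma_pos_of_pos hb
    have hgp : Real.Gamma ((p:ℝ)+1) > 0 := Real.Gamma_pos_of_pos (by positivity)
    have hk2 : ((k:ℝ)+2) ≠ 0 := by positivity
    have hsp : Real.sqrt Real.pi > 0 := Real.sqrt_pos.mpr Real.pi_pos
    rw [pow_succ]
    have h2p : (2:ℝ)^p ≠ 0 := by positivity
    exact alg (k:ℝ) (p:ℝ) (Real.sqrt Real.pi) (Real.Gamma ((p:ℝ)+1))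
      (Real.Gamma (((p:ℝ) - k)/2)) (Real.Gamma (((p:ℝ) + k)/2 + 3/2)) ((2:ℝ)^p)
      hk2 h2p hg1.ne' hg2.ne' (by nlinarith [hx]) (by positivity)

theorem legendre_moment_formula (m n δ : ℕ) (hδ : δ = 0 ∨ δ = 1) (hmn : m ≤ n) :
    ∫ y in (-1:ℝ)..1, (legendre (2 * m + δ)).eval y * y ^ (2 * n + δ)
      = Real.sqrt Real.pi * Real.Gamma (2 * (n:ℝ) + 1 + δ) /
        (2 ^ (2 * n + δ) * Real.Gamma ((n:ℝ) - (m:ℝ) + 1) *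
          Real.Gamma (3 / 2 + (n:ℝ) + (m:ℝ) + δ)) := by
  rw [key (2*m+δ) (2*n+δ) (by omega) (by omega),
    show ((2*n+δ:ℕ):ℝ) + 1 = 2*(n:ℝ)+1+δ by push_cast; ring,
    show (((2*n+δ:ℕ):ℝ) - ((2*m+δ:ℕ):ℝ))/2 + 1 = (n:ℝ)-(m:ℝ)+1 by push_cast; ring,
    show (((2*n+δ:ℕ):ℝ) + ((2*m+δ:ℕ):ℝ))/2 + 3/2 = 3/2+(n:ℝ)+(m:ℝ)+δ by push_cast; ring]
end

section
/- For every natural number n and real a > 0 and b > 0, the integral from 0 to a of P_{2n}(y/a)·cos(by) dy equals (−1)^n·√(πa/(2b))·J_{2n+1/2}(ab), where J_ν is the Bessel function of the first kind. -/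
open Polynomial MeasureTheory intervalIntegral

/-- Bessel function of the first kind of real order (for positive argument),
defined via its power series using the real power function. -/
noncomputable def besselJ (ν : ℝ) (x : ℝ) : ℝ :=
  ∑' k : ℕ, ((-1) ^ k / ((Nat.factorial k : ℝ) * Real.Gamma ((k : ℝ) + ν + 1))) *
    (x / 2) ^ (2 * (k : ℝ) + ν)

lemma Ginv_rec (x : ℝ) : (Real.Gamma x)⁻¹ = x * (Real.Gamma (x + 1))⁻¹ := by
  rcases eq_or_ne x 0 with h | h
  · simp [h, Real.Gamma_zero]
  · rw [Real.Gamma_add_one h, mul_inv, ← mul_assoc, mul_inv_cancel₀ h, one_mul]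

noncomputable def momF (s m : ℕ) : ℝ :=
  Real.sqrt Real.pi * (Nat.factorial s : ℝ) / 2 ^ (s+1) *
    (Real.Gamma (((s:ℝ) - m)/2 + 1))⁻¹ * (Real.Gamma (((s:ℝ) + m + 3)/2))⁻¹


lemma sqrtpi_pos : 0 < Real.sqrt Real.pi := Real.sqrt_pos.mpr Real.pi_pos

lemma momF_zero (s : ℕ) : momF s 0 = 1/((s:ℝ)+1) := by
  have h := Real.Gamma_mul_Gamma_add_half ((s:ℝ)/2 + 1)
  have e1 : 1 - 2*((s:ℝ)/2+1) = -((s+1 : ℕ) : ℝ) := by push_cast; ring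
  rw [e1, Real.rpow_neg (by norm_num), Real.rpow_natCast] at h
  have e2 : 2*((s:ℝ)/2+1) = ((s+1:ℕ):ℝ)+1 := by push_cast; ring
  rw [e2, Real.Gamma_nat_eq_factorial] at h
  have e3 : (s:ℝ)/2+1+1/2 = ((s:ℝ)+3)/2 := by ring
  rw [e3] at h
  have hA : 0 < Real.Gamma ((s:ℝ)/2+1) := Real.Gamma_pos_of_pos (by positivity)
  have hB : 0 < Real.Gamma (((s:ℝ)+3)/2) := Real.Gamma_pos_of_pos (by positivity)
  simp only [momF, Nat.cast_zero, sub_zero, add_zero]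
  have hfac : (0:ℝ) < (Nat.factorial (s+1) : ℝ) := by positivity
  have hs : (Nat.factorial (s+1) : ℝ) = ((s:ℝ)+1) * (Nat.factorial s) := by
    rw [Nat.factorial_succ]; push_cast; ring
  rw [mul_assoc, ← mul_inv, h, hs]
  have hpi := sqrtpi_pos
  have hf : (0:ℝ) < (Nat.factorial s : ℝ) := by positivity
  field_simp

lemma momF_one (s : ℕ) : momF s 1 = 1/((s:ℝ)+2) := by
  have h := Real.Gamma_mul_Gamma_add_half (((s:ℝ)+1)/2)
  have e1 : 1 - 2*(((s:ℝ)+1)/2) = -((s : ℕ) : ℝ) := by push_cast; ring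
  rw [e1, Real.rpow_neg (by norm_num), Real.rpow_natCast] at h
  have e2 : 2*(((s:ℝ)+1)/2) = ((s:ℕ):ℝ)+1 := by push_cast; ring
  rw [e2, Real.Gamma_nat_eq_factorial] at h
  have e3 : ((s:ℝ)+1)/2+1/2 = ((s:ℝ)+2)/2 := by ring
  rw [e3] at h
  have hA : 0 < Real.Gamma (((s:ℝ)+1)/2) := Real.Gamma_pos_of_pos (by positivity)
  have hB : 0 < Real.Gamma (((s:ℝ)+2)/2) := Real.Gamma_pos_of_pos (by positivity)
  have e4 : ((s:ℝ) - (1:ℕ))/2 + 1 = ((s:ℝ)+1)/2 := by push_cast; ring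
  have e5 : ((s:ℝ) + (1:ℕ) + 3)/2 = ((s:ℝ)+2)/2 + 1 := by push_cast; ring
  have e6 : Real.Gamma (((s:ℝ)+2)/2 + 1) = ((s:ℝ)+2)/2 * Real.Gamma (((s:ℝ)+2)/2) :=
    Real.Gamma_add_one (by positivity)
  rw [momF, e4, e5, e6, mul_inv]
  have : (Real.Gamma (((s:ℝ)+1)/2))⁻¹ * ((((s:ℝ)+2)/2)⁻¹ * (Real.Gamma (((s:ℝ)+2)/2))⁻¹)
      = (((s:ℝ)+2)/2)⁻¹ * (Real.Gamma (((s:ℝ)+1)/2) * Real.Gamma (((s:ℝ)+2)/2))⁻¹ := by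
    rw [mul_inv]; ring
  rw [mul_assoc, this, h]
  have hpi := sqrtpi_pos
  have hf : (0:ℝ) < (Nat.factorial s : ℝ) := by positivity
  have h2 : (0:ℝ) < 2 ^ s := by positivity
  field_simp
  ring

lemma momF_rec (s m : ℕ) :
    momF s (m+2) = (2*(m:ℝ)+3)/((m:ℝ)+2) * momF (s+1) (m+1) - ((m:ℝ)+1)/((m:ℝ)+2) * momF s m := by
  have eA : ((s:ℝ) - ((m:ℕ)+2))/2 + 1 = ((s:ℝ) - m)/2 := by push_cast; ring
  have eB : ((s:ℝ) + ((m:ℕ)+2) + 3)/2 = ((s:ℝ) + m + 3)/2 + 1 := by push_cast; ring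
  have rA : (Real.Gamma (((s:ℝ) - m)/2))⁻¹
      = (((s:ℝ)-m)/2) * (Real.Gamma (((s:ℝ) - m)/2 + 1))⁻¹ := Ginv_rec _
  have rB : (Real.Gamma (((s:ℝ) + m + 3)/2))⁻¹
      = (((s:ℝ)+m+3)/2) * (Real.Gamma (((s:ℝ) + m + 3)/2 + 1))⁻¹ := Ginv_rec _
  have e1A : ((s:ℝ)+1 - ((m:ℝ)+1))/2 + 1 = ((s:ℝ) - m)/2 + 1 := by ring
  have e1B : ((s:ℝ)+1 + ((m:ℝ)+1) + 3)/2 = ((s:ℝ) + m + 3)/2 + 1 := by ring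
  simp only [momF]
  push_cast
  rw [eA, eB, rA, rB, e1A, e1B]
  have hfs : ((Nat.factorial (s+1)):ℝ) = ((s:ℝ)+1) * (Nat.factorial s) := by
    rw [Nat.factorial_succ]; push_cast; ring
  push_cast at hfs ⊢
  rw [hfs]
  have hm : ((m:ℝ)+2) ≠ 0 := by positivity
  have h2 : ((2:ℝ) ^ (s+1+1)) = 2 * 2^(s+1) := by ring
  rw [h2]
  set GA := (Real.Gamma ((↑s - ↑m)/2 + 1))⁻¹ with hGA
  set GB := (Real.Gamma (((s:ℝ) + ↑m + 3)/2 + 1))⁻¹ with hGB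
  have h2p : ((2:ℝ)^(s+1)) ≠ 0 := by positivity
  field_simp
  ring

lemma legendre_moment (m : ℕ) :
    ∀ s : ℕ, ∫ x in (0:ℝ)..1, x^s * (legendre m).eval x = momF s m := by
  induction m using Nat.twoStepInduction with
  | zero =>
    intro s
    simp only [legendre, eval_one, mul_one, integral_pow, momF_zero]
    norm_num
  | one =>
    intro s
    simp only [legendre, eval_X]
    simp_rw [← pow_succ]
    rw [integral_pow, momF_one]
    push_cast
    norm_num
    ring
  | more m ih1 ih2 =>
    intro s
    have int1 : IntervalIntegrable (fun x : ℝ => x^(s+1) * (legendre (m+1)).eval x) volume 0 1 :=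
      ((continuous_pow _).mul (legendre (m+1)).continuous).intervalIntegrable _ _
    have int2 : IntervalIntegrable (fun x : ℝ => x^s * (legendre m).eval x) volume 0 1 :=
      ((continuous_pow _).mul (legendre m).continuous).intervalIntegrable _ _
    have hc : ∀ x : ℝ, x^s * (legendre (m+2)).eval x
        = (2*(m:ℝ)+3)/((m:ℝ)+2) * (x^(s+1) * (legendre (m+1)).eval x)
          - ((m:ℝ)+1)/((m:ℝ)+2) * (x^s * (legendre m).eval x) := by
      intro x
      simp only [legendre, eval_sub, eval_mul, eval_C, eval_X]
      ring
    simp only [hc]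
    rw [intervalIntegral.integral_sub (int1.const_mul _) (int2.const_mul _),
      intervalIntegral.integral_const_mul, intervalIntegral.integral_const_mul,
      ih2 (s+1), ih1 s, momF_rec]

lemma l_vanish (n k : ℕ) (hk : k < n) (c : ℝ) : c * momF (2*k) (2*n) = 0 := by
  have e : (((2*k:ℕ):ℝ) - (2*n:ℕ))/2 + 1 = -(((n - k - 1:ℕ)):ℝ) := by
    have : (k:ℝ) ≤ (n:ℝ) - 1 := by
      have : (k+1:ℕ) ≤ n := hk
      have := Nat.cast_le (α := ℝ).mpr this
      push_cast at this ⊢; linarith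
    push_cast [Nat.cast_sub (by omega : k+1 ≤ n), Nat.cast_sub (by omega : 1 ≤ n - k)]
    push_cast [Nat.cast_sub (by omega : k ≤ n)]
    ring
  rw [momF, e, Real.Gamma_neg_nat_eq_zero]
  simp

lemma match_term (n j : ℕ) (a b : ℝ) (ha : 0 < a) (hb : 0 < b) :
    ((-1:ℝ)^(j+n) * b^(2*(j+n))/((2*(j+n)).factorial:ℝ)) * (a^(2*(j+n)+1) * momF (2*(j+n)) (2*n))
    = ((-1:ℝ)^n * Real.sqrt (Real.pi*a/(2*b))) *
      (((-1:ℝ)^j / ((Nat.factorial j : ℝ) * Real.Gamma ((j:ℝ) + (2*(n:ℝ)+1/2) + 1))) *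
        ((a*b)/2) ^ (2*(j:ℝ) + (2*(n:ℝ)+1/2))) := by
  have eA : (((2*(j+n):ℕ):ℝ) - (2*n:ℕ))/2 + 1 = (j:ℝ) + 1 := by push_cast; ring
  have eB : (((2*(j+n):ℕ):ℝ) + (2*n:ℕ) + 3)/2 = (j:ℝ) + 2*n + 3/2 := by push_cast; ring
  have eC : (j:ℝ) + (2*(n:ℝ)+1/2) + 1 = (j:ℝ) + 2*n + 3/2 := by ring
  have hx : (0:ℝ) < a*b/2 := by positivity
  have eexp : 2*(j:ℝ) + (2*(n:ℝ)+1/2) = ((2*(j+n):ℕ):ℝ) + (1/2:ℝ) := by push_cast; ring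
  have hrpow : ((a*b)/2) ^ (2*(j:ℝ) + (2*(n:ℝ)+1/2))
      = (a*b/2)^(2*(j+n)) * Real.sqrt (a*b/2) := by
    rw [eexp, Real.rpow_add hx, Real.rpow_natCast, Real.sqrt_eq_rpow]
  have hsq : Real.sqrt (Real.pi*a/(2*b)) * Real.sqrt (a*b/2) = Real.sqrt Real.pi * (a/2) := by
    rw [← Real.sqrt_mul (by positivity)]
    have e : Real.pi*a/(2*b) * (a*b/2) = Real.pi * (a/2)^2 := by field_simp
    rw [e, Real.sqrt_mul Real.pi_pos.le, Real.sqrt_sq (by positivity)]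
  rw [momF, eA, eB, eC, hrpow]
  rw [show (j:ℝ) + 1 = ((j:ℕ):ℝ) + 1 from rfl, Real.Gamma_nat_eq_factorial]
  have hG : 0 < Real.Gamma ((j:ℝ) + 2*n + 3/2) := Real.Gamma_pos_of_pos (by positivity)
  have hfj : (0:ℝ) < (Nat.factorial j : ℝ) := by positivity
  have hf2 : (0:ℝ) < ((2*(j+n)).factorial : ℝ) := by positivity
  have hsign : ((-1:ℝ))^(j+n) = (-1:ℝ)^j * (-1:ℝ)^n := pow_add _ _ _
  have hab : (a*b/2)^(2*(j+n)) = a^(2*(j+n)) * b^(2*(j+n)) / 2^(2*(j+n)) := by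
    rw [div_pow, mul_pow]
  rw [hsign, hab]
  have h2p : ((2:ℝ)^(2*(j+n)+1)) ≠ 0 := by positivity
  field_simp
  ring_nf
  have e1 : a * Real.pi * b⁻¹ * (1 / 2) = Real.pi*a/(2*b) := by ring
  have e2 : a * b * (1 / 2) = a*b/2 := by ring
  rw [show a ^ (j * 2) * a ^ (n * 2) * √(a * Real.pi * b⁻¹ * (1 / 2)) * √(a * b * (1 / 2)) * 2 ^ (j * 2) * 2 ^ (n * 2) * 2 = a ^ (j * 2) * a ^ (n * 2) * (√(a * Real.pi * b⁻¹ * (1 / 2)) * √(a * b * (1 / 2))) * 2 ^ (j * 2) * 2 ^ (n * 2) * 2 by ring, e1, e2, hsq]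
  ring

lemma term_integral (n k : ℕ) (a b : ℝ) (ha : 0 < a) :
    ∫ y in (0:ℝ)..a, (legendre (2*n)).eval (y/a) * ((-1:ℝ)^k * (b*y)^(2*k) / ((2*k).factorial : ℝ))
    = ((-1:ℝ)^k * b^(2*k) / ((2*k).factorial : ℝ)) * (a^(2*k+1) * momF (2*k) (2*n)) := by
  set P := legendre (2*n) with hP
  have h1 : ∀ y : ℝ, P.eval (y/a) * ((-1:ℝ)^k * (b*y)^(2*k) / ((2*k).factorial : ℝ))
      = ((-1:ℝ)^k * b^(2*k) / ((2*k).factorial : ℝ)) * (P.eval (y/a) * y^(2*k)) := by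
    intro y; rw [mul_pow]; ring
  simp only [h1]
  rw [intervalIntegral.integral_const_mul]
  congr 1
  have key : (∫ y in (0:ℝ)..a, P.eval (y/a) * y^(2*k))
      = a * ∫ x in (0:ℝ)..1, P.eval ((a*x)/a) * (a*x)^(2*k) := by
    rw [intervalIntegral.integral_comp_mul_left (fun y => P.eval (y/a) * y^(2*k)) (ne_of_gt ha),
      mul_zero, mul_one, smul_eq_mul, ← mul_assoc, mul_inv_cancel₀ (ne_of_gt ha), one_mul]
  rw [key]
  have h2 : ∀ x : ℝ, P.eval ((a*x)/a) * (a*x)^(2*k) = a^(2*k) * (x^(2*k) * P.eval x) := by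
    intro x
    rw [mul_div_cancel_left₀ x (ne_of_gt ha), mul_pow]
    ring
  simp only [h2]
  rw [intervalIntegral.integral_const_mul, legendre_moment]
  ring

theorem legendre_cos_integral (n : ℕ) (a b : ℝ) (ha : 0 < a) (hb : 0 < b) :
    ∫ y in (0:ℝ)..a, (legendre (2 * n)).eval (y / a) * Real.cos (b * y)
      = (-1) ^ n * Real.sqrt (Real.pi * a / (2 * b)) * besselJ (2 * n + 1 / 2) (a * b) := by
  set P := legendre (2*n) with hP
  set f : ℕ → ℝ → ℝ := fun k y => P.eval (y/a) * ((-1:ℝ)^k * (b*y)^(2*k) / ((2*k).factorial : ℝ))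
    with hf
  have hcos : (fun y : ℝ => P.eval (y/a) * Real.cos (b*y)) = fun y => ∑' k : ℕ, f k y := by
    funext y
    rw [Real.cos_eq_tsum (b*y), ← tsum_mul_left]
  -- continuity/integrability of each term
  have hfc : ∀ k, Continuous (f k) := by
    intro k
    apply Continuous.mul
    · exact P.continuous.comp (continuous_id.div_const a)
    · apply Continuous.div_const
      exact continuous_const.mul ((continuous_const.mul continuous_id).pow _)
  have hint : ∀ k : ℕ, Integrable (f k) (volume.restrict (Set.Ioc (0:ℝ) a)) := fun k =>
    (hfc k).integrableOn_Ioc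
  -- bound
  obtain ⟨C, hC⟩ := (isCompact_Icc : IsCompact (Set.Icc (0:ℝ) 1)).exists_bound_of_continuousOn
    P.continuous.continuousOn
  have hC0 : 0 ≤ C := le_trans (norm_nonneg _) (hC 0 ⟨le_refl 0, zero_le_one⟩)
  have hptbound : ∀ k : ℕ, ∀ y ∈ Set.Ioc (0:ℝ) a,
      ‖f k y‖ ≤ C * ((b*a)^(2*k) / ((2*k).factorial : ℝ)) := by
    intro k y hy
    have hya : y/a ∈ Set.Icc (0:ℝ) 1 := by
      constructor
      · exact div_nonneg hy.1.le ha.le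
      · rw [div_le_one ha]; exact hy.2
    have h1 : ‖P.eval (y/a)‖ ≤ C := hC _ hya
    have hby : 0 ≤ b * y := mul_nonneg hb.le hy.1.le
    have h2 : ‖(-1:ℝ)^k * (b*y)^(2*k) / ((2*k).factorial : ℝ)‖
        ≤ (b*a)^(2*k) / ((2*k).factorial : ℝ) := by
      rw [norm_div, norm_mul, norm_pow, norm_neg, norm_one, one_pow, one_mul, norm_pow,
        Real.norm_of_nonneg hby, Real.norm_of_nonneg (by positivity : (0:ℝ) ≤ ((2*k).factorial : ℝ))]
      apply div_le_div_of_nonneg_right ?_ (by positivity)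
      · exact pow_le_pow_left₀ hby (by nlinarith [hy.1, hy.2, hb] : b*y ≤ b*a) _
    calc ‖f k y‖ = ‖P.eval (y/a)‖ * ‖(-1:ℝ)^k * (b*y)^(2*k) / ((2*k).factorial : ℝ)‖ :=
          norm_mul _ _
      _ ≤ C * ((b*a)^(2*k) / ((2*k).factorial : ℝ)) :=
          mul_le_mul h1 h2 (norm_nonneg _) hC0
  have hsummaj : Summable (fun k : ℕ => C * a * ((b*a)^(2*k) / ((2*k).factorial : ℝ))) := by
    have : Summable (fun m : ℕ => (b*a)^m / (m.factorial : ℝ)) :=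
      Real.summable_pow_div_factorial (b*a)
    exact ((this.comp_injective (fun x y h => by
      simpa using h : Function.Injective (fun m : ℕ => 2 * m)))).mul_left _
  have hsum : Summable fun k : ℕ => ∫ y in Set.Ioc (0:ℝ) a, ‖f k y‖ := by
    apply Summable.of_nonneg_of_le (fun k => integral_nonneg (fun y => norm_nonneg _))
      ?_ hsummaj
    intro k
    have heq : (∫ y in Set.Ioc (0:ℝ) a, ‖f k y‖) = ∫ y in (0:ℝ)..a, ‖f k y‖ :=
      (intervalIntegral.integral_of_le ha.le).symm
    rw [heq]
    have hnn : 0 ≤ ∫ y in (0:ℝ)..a, ‖f k y‖ :=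
      intervalIntegral.integral_nonneg ha.le (fun y _ => norm_nonneg _)
    have := intervalIntegral.norm_integral_le_of_norm_le_const
      (C := C * ((b*a)^(2*k) / ((2*k).factorial : ℝ))) (f := fun y => ‖f k y‖) (a := 0) (b := a) ?_
    · rw [Real.norm_of_nonneg hnn] at this
      calc (∫ y in (0:ℝ)..a, ‖f k y‖) ≤ C * ((b*a)^(2*k) / ((2*k).factorial : ℝ)) * |a - 0| :=
            this
        _ = C * a * ((b*a)^(2*k) / ((2*k).factorial : ℝ)) := by
            rw [sub_zero, abs_of_pos ha]; ring
    · intro y hy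
      rw [Set.uIoc_of_le ha.le] at hy
      rw [Real.norm_of_nonneg (norm_nonneg _)]
      exact hptbound k y hy
  -- main computation
  rw [intervalIntegral.integral_of_le ha.le, hcos,
    ← MeasureTheory.integral_tsum_of_summable_integral_norm hint hsum]
  have hterm : ∀ k : ℕ, (∫ y in Set.Ioc (0:ℝ) a, f k y)
      = ((-1:ℝ)^k * b^(2*k) / ((2*k).factorial : ℝ)) * (a^(2*k+1) * momF (2*k) (2*n)) := by
    intro k
    rw [← intervalIntegral.integral_of_le ha.le]
    exact term_integral n k a b ha
  rw [tsum_congr hterm]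
  -- reindex
  set l : ℕ → ℝ := fun k =>
    ((-1:ℝ)^k * b^(2*k) / ((2*k).factorial : ℝ)) * (a^(2*k+1) * momF (2*k) (2*n)) with hl
  have hreindex : ∑' k, l k = ∑' j, l (j + n) := by
    refine (Function.Injective.tsum_eq (g := fun j : ℕ => j + n)
      (fun x y h => by simpa using h) ?_).symm
    intro k hk
    rcases lt_or_ge k n with h | h
    · refine absurd ?_ hk
      have he : l k = ((((-1:ℝ))^k * b^(2*k)/((2*k).factorial:ℝ)) * a^(2*k+1))
          * momF (2*k) (2*n) := by simp only [hl]; ring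
      rw [he, l_vanish n k h]
    · exact ⟨k - n, by show k - n + n = k; omega⟩
  rw [hreindex]
  simp only [besselJ]
  rw [← tsum_mul_left]
  exact tsum_congr fun j => match_term n j a b ha hb
end

section
/- For every natural number n and real a > 0 and b > 0, the integral from 0 to a of P_{2n+1}(y/a)·sin(by) dy equals (−1)^n·√(πa/(2b))·J_{2n+3/2}(ab). -/
open Polynomial MeasureTheory intervalIntegral

noncomputable def momT (m s : ℕ) : ℝ :=
  if s < m then 0 else
    (s.factorial : ℝ) * 2^m * (((s+m)/2).factorial) / ((((s-m)/2).factorial) * ((s+m+1).factorial))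

lemma momT_rec (m s : ℕ) (hp : s % 2 = m % 2) :
    momT (m+2) s = ((2*(m:ℝ)+3)/((m:ℝ)+2)) * momT (m+1) (s+1)
      - (((m:ℝ)+1)/((m:ℝ)+2)) * momT m s := by
  rcases lt_trichotomy s m with h | h | h
  · rw [momT, if_pos (by omega), momT, if_pos (by omega), momT, if_pos (by omega)]
    ring
  · subst h
    rw [momT, if_pos (by omega), momT, if_neg (by omega), momT, if_neg (by omega)]
    have e1 : (s+1+(s+1))/2 = s+1 := by omega
    have e2 : (s+1-(s+1))/2 = 0 := by omega
    have e3 : (s+s)/2 = s := by omega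
    have e4 : (s-s)/2 = 0 := by omega
    rw [e1, e2, e3, e4]
    have f1 : ((s+1+(s+1)+1).factorial : ℝ) = (2*s+3) * ((2*s+2)) * (s+s+1).factorial := by
      rw [show s+1+(s+1)+1 = (s+s+1)+1+1 by ring]
      rw [Nat.factorial_succ, Nat.factorial_succ]
      push_cast; ring
    have f2 : ((s+1).factorial : ℝ) = (s+1) * s.factorial := by
      rw [Nat.factorial_succ]; push_cast; ring
    rw [f1, f2]
    have h1 : ((s+s+1).factorial : ℝ) ≠ 0 := Nat.cast_ne_zero.2 (Nat.factorial_ne_zero _)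
    have h2 : (s.factorial : ℝ) ≠ 0 := Nat.cast_ne_zero.2 (Nat.factorial_ne_zero _)
    have h3 : ((s:ℝ)) + 2 ≠ 0 := by positivity
    field_simp
    ring
  · -- s ≥ m+2, same parity: s = m + 2 + 2j
    obtain ⟨j, rfl⟩ : ∃ j, s = m + 2 * j + 2 := ⟨(s - m - 2)/2, by omega⟩
    rw [momT, if_neg (by omega), momT, if_neg (by omega), momT, if_neg (by omega)]
    have e1 : (m+2*j+2+(m+2))/2 = m+j+2 := by omega
    have e2 : (m+2*j+2-(m+2))/2 = j := by omega
    have e3 : (m+2*j+2+1+(m+1))/2 = m+j+2 := by omega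
    have e4 : (m+2*j+2+1-(m+1))/2 = j+1 := by omega
    have e5 : (m+2*j+2+m)/2 = m+j+1 := by omega
    have e6 : (m+2*j+2-m)/2 = j+1 := by omega
    rw [e1, e2, e3, e4, e5, e6]
    -- base factorials: F := (m+2*j+2)!, G := (m+j+1)!, J := j!, H := (2m+2j+3)!
    have f1 : ((m+2*j+2+1).factorial : ℝ) = (m+2*j+3) * (m+2*j+2).factorial := by
      rw [Nat.factorial_succ]; push_cast; ring
    have f2 : ((m+j+2).factorial : ℝ) = (m+j+2) * (m+j+1).factorial := by
      rw [show m+j+2 = (m+j+1)+1 by ring, Nat.factorial_succ]; push_cast; ring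
    have f3 : ((j+1).factorial : ℝ) = (j+1) * j.factorial := by
      rw [Nat.factorial_succ]; push_cast; ring
    have f4 : ((m+2*j+2+(m+2)+1).factorial : ℝ)
        = (2*m+2*j+5) * (2*m+2*j+4) * (m+2*j+2+m+1).factorial := by
      rw [show m+2*j+2+(m+2)+1 = (m+2*j+2+m+1)+1+1 by ring, Nat.factorial_succ,
        Nat.factorial_succ]
      push_cast; ring
    have f5 : ((m+2*j+2+1+(m+1)+1).factorial : ℝ)
        = (2*m+2*j+5) * (2*m+2*j+4) * (m+2*j+2+m+1).factorial := by
      rw [show m+2*j+2+1+(m+1)+1 = (m+2*j+2+m+1)+1+1 by ring, Nat.factorial_succ,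
        Nat.factorial_succ]
      push_cast; ring
    rw [f1, f2, f3, f4, f5]
    have h1 : ((m+2*j+2+m+1).factorial : ℝ) ≠ 0 := Nat.cast_ne_zero.2 (Nat.factorial_ne_zero _)
    have h2 : ((m+j+1).factorial : ℝ) ≠ 0 := Nat.cast_ne_zero.2 (Nat.factorial_ne_zero _)
    have h3 : (j.factorial : ℝ) ≠ 0 := Nat.cast_ne_zero.2 (Nat.factorial_ne_zero _)
    have h4 : ((m+2*j+2).factorial : ℝ) ≠ 0 := Nat.cast_ne_zero.2 (Nat.factorial_ne_zero _)
    have h5 : ((m:ℝ)) + 2 ≠ 0 := by positivity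
    field_simp
    ring
lemma mom_rec (m s : ℕ) :
    (∫ x in (0:ℝ)..1, x^s * (legendre (m+2)).eval x)
      = (((2*(m:ℝ)+3)/((m:ℝ)+2)) * ∫ x in (0:ℝ)..1, x^(s+1) * (legendre (m+1)).eval x)
        - ((((m:ℝ)+1)/((m:ℝ)+2)) * ∫ x in (0:ℝ)..1, x^s * (legendre m).eval x) := by
  have h1 : Continuous fun x : ℝ => x^(s+1) * (legendre (m+1)).eval x :=
    (continuous_pow _).mul (legendre (m+1)).continuous
  have h2 : Continuous fun x : ℝ => x^s * (legendre m).eval x :=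
    (continuous_pow _).mul (legendre m).continuous
  calc (∫ x in (0:ℝ)..1, x^s * (legendre (m+2)).eval x)
      = ∫ x in (0:ℝ)..1, (((2*(m:ℝ)+3)/((m:ℝ)+2)) * (x^(s+1) * (legendre (m+1)).eval x)
          - (((m:ℝ)+1)/((m:ℝ)+2)) * (x^s * (legendre m).eval x)) := by
        congr 1; ext x; simp [legendre, eval_mul, eval_sub]; ring
    _ = _ := by
        rw [intervalIntegral.integral_sub ((h1.intervalIntegrable _ _).const_mul _)
          ((h2.intervalIntegrable _ _).const_mul _),
          intervalIntegral.integral_const_mul, intervalIntegral.integral_const_mul]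
lemma mom_eq (m : ℕ) : ∀ s, s % 2 = m % 2 →
    (∫ x in (0:ℝ)..1, x^s * (legendre m).eval x) = momT m s := by
  induction m using Nat.strong_induction_on with
  | _ m ih =>
    match m with
    | 0 =>
      intro s _
      have : (∫ x in (0:ℝ)..1, x^s * (legendre 0).eval x) = ∫ x in (0:ℝ)..1, x^s := by
        congr 1; ext x; simp [legendre]
      rw [this, integral_pow, momT, if_neg (by omega)]
      have f : ((s+0+1).factorial : ℝ) = (s+1) * s.factorial := by
        rw [show s+0+1 = s+1 by ring, Nat.factorial_succ]; push_cast; ring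
      rw [show s+0 = s by ring] at f ⊢
      rw [show s-0 = s by omega, f]
      have h2 : (s.factorial : ℝ) ≠ 0 := Nat.cast_ne_zero.2 (Nat.factorial_ne_zero _)
      have h4 : ((s/2).factorial : ℝ) ≠ 0 := Nat.cast_ne_zero.2 (Nat.factorial_ne_zero _)
      have h3 : ((s:ℝ)) + 1 ≠ 0 := by positivity
      field_simp
      ring
    | 1 =>
      intro s hp
      obtain ⟨j, rfl⟩ : ∃ j, s = 2*j+1 := ⟨(s-1)/2, by omega⟩
      have : (∫ x in (0:ℝ)..1, x^(2*j+1) * (legendre 1).eval x)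
          = ∫ x in (0:ℝ)..1, x^(2*j+2) := by
        congr 1; ext x; simp [legendre]; ring
      rw [this, integral_pow, momT, if_neg (by omega)]
      have e1 : (2*j+1+1)/2 = j+1 := by omega
      have e2 : (2*j+1-1)/2 = j := by omega
      rw [e1, e2]
      have f1 : ((j+1).factorial : ℝ) = (j+1) * j.factorial := by
        rw [Nat.factorial_succ]; push_cast; ring
      have f2 : ((2*j+1+1+1).factorial : ℝ) = (2*j+3)*(2*j+2)*(2*j+1).factorial := by
        rw [show 2*j+1+1+1 = (2*j+1)+1+1 by ring, Nat.factorial_succ, Nat.factorial_succ]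
        push_cast; ring
      rw [f1, f2]
      have h1 : ((2*j+1).factorial : ℝ) ≠ 0 := Nat.cast_ne_zero.2 (Nat.factorial_ne_zero _)
      have h3 : (j.factorial : ℝ) ≠ 0 := Nat.cast_ne_zero.2 (Nat.factorial_ne_zero _)
      field_simp
      push_cast
      ring
    | (k+2) =>
      intro s hp
      rw [mom_rec, ih (k+1) (by omega) (s+1) (by omega), ih k (by omega) s (by omega),
        momT_rec k s (by omega)]
lemma exchange (p : Polynomial ℝ) (a b : ℝ) (ha : 0 < a) (hb : 0 < b) :
    (∫ y in (0:ℝ)..a, p.eval (y/a) * Real.sin (b*y))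
      = ∑' k : ℕ, ((-1:ℝ)^k * b^(2*k+1) / ((2*k+1).factorial : ℝ))
          * ∫ y in (0:ℝ)..a, p.eval (y/a) * y^(2*k+1) := by
  obtain ⟨C, hC⟩ := isCompact_Icc.exists_bound_of_continuousOn
    (s := Set.Icc (0:ℝ) 1) (p.continuousOn)
  have hC0 : 0 ≤ C := le_trans (norm_nonneg _) (hC 0 (by norm_num))
  set F : ℕ → ℝ → ℝ := fun k y =>
    ((-1:ℝ)^k * b^(2*k+1) / ((2*k+1).factorial : ℝ)) * (p.eval (y/a) * y^(2*k+1)) with hF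
  have hFcont : ∀ k, Continuous (F k) := by
    intro k
    exact continuous_const.mul ((p.continuous.comp (continuous_id.div_const a)).mul
      (continuous_pow _))
  have hFint : ∀ k, IntegrableOn (F k) (Set.Ioc 0 a) volume := fun k =>
    ((hFcont k).integrableOn_Icc (μ := volume)).mono_set Set.Ioc_subset_Icc_self
  -- pointwise sum
  have hpt : ∀ y ∈ Set.Ioc (0:ℝ) a, (∑' k, F k y) = p.eval (y/a) * Real.sin (b*y) := by
    intro y _
    have h := (Real.hasSum_sin (b*y)).mul_left (p.eval (y/a))
    rw [← h.tsum_eq]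
    refine tsum_congr fun k => ?_
    rw [hF]
    simp only [mul_pow]
    ring
  -- bound on norms
  have hbnd : ∀ k, (∫ y in Set.Ioc (0:ℝ) a, ‖F k y‖)
      ≤ (C * (b*a)^(2*k+1) / ((2*k+1).factorial : ℝ)) * a := by
    intro k
    have h1 : ∀ y ∈ Set.Ioc (0:ℝ) a, ‖F k y‖ ≤ C * (b*a)^(2*k+1) / ((2*k+1).factorial : ℝ) := by
      intro y hy
      have hya : y/a ∈ Set.Icc (0:ℝ) 1 := by
        constructor
        · exact div_nonneg hy.1.le ha.le
        · rw [div_le_one ha]; exact hy.2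
      have h2 : ‖p.eval (y/a)‖ ≤ C := hC _ hya
      have hy0 : 0 < y := hy.1
      have h3 : y^(2*k+1) ≤ a^(2*k+1) := pow_le_pow_left₀ hy0.le hy.2 _
      calc ‖F k y‖ = b^(2*k+1) * ‖p.eval (y/a)‖ * y^(2*k+1) / ((2*k+1).factorial : ℝ) := by
            rw [hF, Real.norm_eq_abs, abs_mul, abs_div, abs_mul, abs_pow, abs_pow, abs_neg,
              abs_one, one_pow, abs_mul, abs_pow, abs_of_nonneg hb.le,
              abs_of_nonneg (Nat.cast_nonneg _), abs_of_nonneg hy0.le, ← Real.norm_eq_abs]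
            ring
        _ ≤ b^(2*k+1) * C * a^(2*k+1) / ((2*k+1).factorial : ℝ) := by
            gcongr
        _ = C * (b*a)^(2*k+1) / ((2*k+1).factorial : ℝ) := by rw [mul_pow]; ring
    calc (∫ y in Set.Ioc (0:ℝ) a, ‖F k y‖)
        ≤ ∫ _ in Set.Ioc (0:ℝ) a, (C * (b*a)^(2*k+1) / ((2*k+1).factorial : ℝ)) :=
          setIntegral_mono_on (hFint k).norm (integrableOn_const measure_Ioc_lt_top.ne)
            measurableSet_Ioc h1
      _ = (C * (b*a)^(2*k+1) / ((2*k+1).factorial : ℝ)) * a := by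
          rw [setIntegral_const, Real.volume_real_Ioc, smul_eq_mul, sub_zero,
            max_eq_left ha.le, mul_comm]
  have hsum0 : Summable fun k : ℕ => (b*a)^(2*k+1) / ((2*k+1).factorial : ℝ) := by
    have := Real.summable_pow_div_factorial (b*a)
    exact (this.comp_injective (fun x y h => by simp only at h; omega : Function.Injective fun k : ℕ => 2*k+1))
  have hsum : Summable fun k => ∫ y in Set.Ioc (0:ℝ) a, ‖F k y‖ := by
    apply Summable.of_nonneg_of_le (fun k => integral_nonneg fun y => norm_nonneg _) hbnd
    have : (fun k => (C * (b*a)^(2*k+1) / ((2*k+1).factorial : ℝ)) * a)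
        = fun k => (C*a) * ((b*a)^(2*k+1) / ((2*k+1).factorial : ℝ)) := by
      funext k; ring
    rw [this]
    exact hsum0.mul_left _
  rw [intervalIntegral.integral_of_le ha.le]
  rw [← setIntegral_congr_fun measurableSet_Ioc hpt]
  rw [← MeasureTheory.integral_tsum_of_summable_integral_norm hFint hsum]
  refine tsum_congr fun k => ?_
  rw [intervalIntegral.integral_of_le ha.le, ← MeasureTheory.integral_const_mul]
lemma gamma_half (m : ℕ) :
    Real.Gamma ((m:ℝ) + 1/2)
      = Real.sqrt Real.pi * (2*m).factorial / (4^m * m.factorial) := by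
  induction m with
  | zero =>
    rw [show ((0:ℕ):ℝ) + 1/2 = 1/2 by norm_num, Real.Gamma_one_half_eq]
    simp
  | succ k ih =>
    have h : ((k+1:ℕ):ℝ) + 1/2 = ((k:ℝ) + 1/2) + 1 := by push_cast; ring
    rw [h, Real.Gamma_add_one (by positivity), ih]
    have f1 : ((2*(k+1)).factorial : ℝ) = (2*k+2)*(2*k+1)*(2*k).factorial := by
      rw [show 2*(k+1) = (2*k)+1+1 by ring, Nat.factorial_succ, Nat.factorial_succ]
      push_cast; ring
    have f2 : ((k+1).factorial : ℝ) = (k+1) * k.factorial := by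
      rw [Nat.factorial_succ]; push_cast; ring
    rw [f1, f2]
    have h1 : (k.factorial:ℝ) ≠ 0 := Nat.cast_ne_zero.2 (Nat.factorial_ne_zero _)
    have h2 : (4:ℝ)^k ≠ 0 := by positivity
    field_simp
    ring

lemma subst_lemma (p : Polynomial ℝ) (a : ℝ) (ha : 0 < a) (s : ℕ) :
    (∫ y in (0:ℝ)..a, p.eval (y/a) * y^s)
      = a^(s+1) * ∫ x in (0:ℝ)..1, x^s * p.eval x := by
  calc (∫ y in (0:ℝ)..a, p.eval (y/a) * y^s)
      = ∫ y in (0:ℝ)..a, (fun x => p.eval x * (a*x)^s) (y/a) := by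
        refine intervalIntegral.integral_congr fun y _ => ?_
        simp only
        rw [mul_div_cancel₀ _ ha.ne']
    _ = a • ∫ x in ((0:ℝ)/a)..(a/a), (fun x => p.eval x * (a*x)^s) x := by
        exact intervalIntegral.integral_comp_div (a := 0) (b := a)
          (fun x => p.eval x * (a*x)^s) ha.ne'
    _ = a^(s+1) * ∫ x in (0:ℝ)..1, x^s * p.eval x := by
        rw [zero_div, div_self ha.ne']
        simp only
        have h2 : ∀ x : ℝ, p.eval x * (a*x)^s = a^s * (x^s * p.eval x) := by
          intro x; rw [mul_pow]; ring
        simp_rw [h2]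
        rw [intervalIntegral.integral_const_mul, smul_eq_mul]
        ring

set_option maxHeartbeats 2000000 in
theorem legendre_sin_integral (n : ℕ) (a b : ℝ) (ha : 0 < a) (hb : 0 < b) :
    ∫ y in (0:ℝ)..a, (legendre (2 * n + 1)).eval (y / a) * Real.sin (b * y)
      = (-1) ^ n * Real.sqrt (Real.pi * a / (2 * b)) * besselJ (2 * n + 3 / 2) (a * b) := by
  set f : ℕ → ℝ := fun k =>
    ((-1:ℝ)^k * b^(2*k+1) / ((2*k+1).factorial:ℝ))
      * (a^(2*k+2) * momT (2*n+1) (2*k+1)) with hf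
  have hint : ∀ k, (∫ y in (0:ℝ)..a, (legendre (2*n+1)).eval (y/a) * y^(2*k+1))
      = a^(2*k+2) * momT (2*n+1) (2*k+1) := by
    intro k
    rw [subst_lemma _ a ha, mom_eq (2*n+1) (2*k+1) (by omega),
      show 2*k+1+1 = 2*k+2 from by omega]
  have hLHS : (∫ y in (0:ℝ)..a, (legendre (2*n+1)).eval (y/a) * Real.sin (b*y))
      = ∑' k, f k := by
    rw [exchange (legendre (2*n+1)) a b ha hb]
    exact tsum_congr fun k => by rw [hint k, hf]
  rw [hLHS]
  -- closed form of shifted terms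
  have hval : ∀ j, f (j+n)
      = ((-1:ℝ)^(j+n) * (b^(2*j+2*n+1) * a^(2*j+2*n+2) * 2^(2*n+1)
          * ((j+2*n+1).factorial:ℝ)))
        / ((j.factorial:ℝ) * ((2*j+4*n+3).factorial:ℝ)) := by
    intro j
    rw [hf]
    simp only
    rw [show 2*(j+n)+1 = 2*j+2*n+1 from by omega, show 2*(j+n)+2 = 2*j+2*n+2 from by omega]
    rw [momT, if_neg (by omega)]
    rw [show (2*j+2*n+1+(2*n+1))/2 = j+2*n+1 from by omega,
      show (2*j+2*n+1-(2*n+1))/2 = j from by omega,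
      show 2*j+2*n+1+(2*n+1)+1 = 2*j+4*n+3 from by omega]
    have h1 : ((2*j+2*n+1).factorial:ℝ) ≠ 0 := Nat.cast_ne_zero.2 (Nat.factorial_ne_zero _)
    have h2 : (j.factorial:ℝ) ≠ 0 := Nat.cast_ne_zero.2 (Nat.factorial_ne_zero _)
    have h3 : ((2*j+4*n+3).factorial:ℝ) ≠ 0 := Nat.cast_ne_zero.2 (Nat.factorial_ne_zero _)
    field_simp
  -- summability
  have hsummand : Summable (fun j => f (j+n)) := by
    apply Summable.of_norm_bounded
      (g := fun j => (b^(2*n+1) * a^(2*n+2) * 2^(2*n+1)) * (((a*b)^2)^j / (j.factorial:ℝ)))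
      ((Real.summable_pow_div_factorial ((a*b)^2)).mul_left _)
    intro j
    rw [hval j]
    have h1 : ((j+2*n+1).factorial:ℝ) ≤ ((2*j+4*n+3).factorial:ℝ) := by
      exact_mod_cast Nat.factorial_le (by omega)
    have h2 : (0:ℝ) < (j.factorial:ℝ) := by positivity
    have h3 : (0:ℝ) < ((2*j+4*n+3).factorial:ℝ) := by positivity
    calc ‖((-1:ℝ)^(j+n) * (b^(2*j+2*n+1) * a^(2*j+2*n+2) * 2^(2*n+1)
            * ((j+2*n+1).factorial:ℝ)))
          / ((j.factorial:ℝ) * ((2*j+4*n+3).factorial:ℝ))‖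
        = (b^(2*j+2*n+1) * a^(2*j+2*n+2) * 2^(2*n+1) * ((j+2*n+1).factorial:ℝ))
          / ((j.factorial:ℝ) * ((2*j+4*n+3).factorial:ℝ)) := by
          rw [Real.norm_eq_abs, abs_div, abs_mul, abs_pow, abs_neg, abs_one, one_pow, one_mul,
            abs_of_nonneg (by positivity), abs_of_nonneg (by positivity)]
      _ ≤ (b^(2*j+2*n+1) * a^(2*j+2*n+2) * 2^(2*n+1) * ((2*j+4*n+3).factorial:ℝ))
          / ((j.factorial:ℝ) * ((2*j+4*n+3).factorial:ℝ)) := by gcongr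
      _ = (b^(2*n+1) * a^(2*n+2) * 2^(2*n+1)) * (((a*b)^2)^j / (j.factorial:ℝ)) := by
          field_simp
          ring
  have hsum_f : Summable f := (summable_nat_add_iff n).mp hsummand
  rw [← Summable.sum_add_tsum_nat_add n hsum_f]
  rw [Finset.sum_eq_zero (fun i hi => by
    rw [hf]
    simp only
    rw [momT, if_pos (by have := Finset.mem_range.mp hi; omega), mul_zero, mul_zero]), zero_add]
  simp only [besselJ]
  rw [← tsum_mul_left]
  refine tsum_congr fun j => ?_
  rw [hval j]
  have hg : Real.Gamma ((j:ℝ) + (2*(n:ℝ) + 3/2) + 1)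
      = Real.sqrt Real.pi * ((2*(j+2*n+2)).factorial:ℝ)
        / (4^(j+2*n+2) * ((j+2*n+2).factorial:ℝ)) := by
    rw [show (j:ℝ) + (2*(n:ℝ) + 3/2) + 1 = ((j+2*n+2 : ℕ):ℝ) + 1/2 by push_cast; ring]
    exact gamma_half _
  have hx : (0:ℝ) < a*b/2 := by positivity
  have hrp : ((a*b)/2 : ℝ) ^ (2*(j:ℝ) + (2*(n:ℝ) + 3/2))
      = (a*b/2)^(2*j+2*n+1) * Real.sqrt (a*b/2) := by
    rw [show 2*(j:ℝ) + (2*(n:ℝ) + 3/2) = ((2*j+2*n+1 : ℕ):ℝ) + (1/2:ℝ) by push_cast; ring,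
      Real.rpow_add hx, Real.rpow_natCast, ← Real.sqrt_eq_rpow]
  rw [hg, hrp]
  have hsb : Real.sqrt (a*b/2) ≠ 0 := by positivity
  have hsq : Real.sqrt (Real.pi*a/(2*b)) = (Real.sqrt Real.pi * a / 2) / Real.sqrt (a*b/2) := by
    rw [eq_div_iff hsb, ← Real.sqrt_mul (by positivity),
      show Real.pi*a/(2*b)*(a*b/2) = Real.pi * (a/2)^2 by field_simp,
      Real.sqrt_mul Real.pi_nonneg, Real.sqrt_sq (by positivity)]
    ring
  rw [hsq]
  have f1 : ((2*(j+2*n+2)).factorial : ℝ) = (2*j+4*n+4) * ((2*j+4*n+3).factorial:ℝ) := by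
    rw [show 2*(j+2*n+2) = (2*j+4*n+3)+1 from by ring, Nat.factorial_succ]; push_cast; ring
  have f2 : ((j+2*n+2).factorial : ℝ) = ((j:ℝ)+2*n+2) * ((j+2*n+1).factorial:ℝ) := by
    rw [show j+2*n+2 = (j+2*n+1)+1 from by ring, Nat.factorial_succ]; push_cast; ring
  rw [f1, f2, show (4:ℝ) = 2^2 from by norm_num, ← pow_mul]
  have h1 : (j.factorial:ℝ) ≠ 0 := Nat.cast_ne_zero.2 (Nat.factorial_ne_zero _)
  have h2 : ((2*j+4*n+3).factorial:ℝ) ≠ 0 := Nat.cast_ne_zero.2 (Nat.factorial_ne_zero _)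
  have h3 : ((j+2*n+1).factorial:ℝ) ≠ 0 := Nat.cast_ne_zero.2 (Nat.factorial_ne_zero _)
  have h4 : Real.sqrt Real.pi ≠ 0 := by positivity
  have h5 : (2:ℝ) ≠ 0 := two_ne_zero
  have h6 : ((j:ℝ)+2*n+2) ≠ 0 := by positivity
  have h7 : (a:ℝ) ≠ 0 := ha.ne'
  have h8 : (b:ℝ) ≠ 0 := hb.ne'
  field_simp
  ring_nf
  simp only [one_div, inv_pow]
  field_simp
  ring
end

section
/- Let q be continuous on [0,b] and f a non-vanishing C² solution of f'' = q f with f(0)=1. Define the formal powers φ_k via the recursive integrals X^{(n)} and X̃^{(n)} (Definition of SPPS). Then for k ≥ 1, φ_k'(x) = k·ψ_{k−1}(x) + (f'(x)/f(x))·φ_k(x) for all x ∈ [0,b]. -/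
open MeasureTheory intervalIntegral

/-- The recursive integrals X^{(n)} associated with a particular solution f. -/
noncomputable def Xrec (f : ℝ → ℂ) : ℕ → ℝ → ℂ
  | 0 => fun _ => 1
  | (n + 1) => fun x => (n + 1 : ℂ) *
      ∫ s in (0:ℝ)..x, Xrec f n s * ((f s ^ 2) ^ ((-1 : ℤ) ^ (n + 1)))

/-- The recursive integrals X̃^{(n)} associated with a particular solution f. -/
noncomputable def Xtrec (f : ℝ → ℂ) : ℕ → ℝ → ℂ
  | 0 => fun _ => 1
  | (n + 1) => fun x => (n + 1 : ℂ) *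
      ∫ s in (0:ℝ)..x, Xtrec f n s * ((f s ^ 2) ^ ((-1 : ℤ) ^ n))

/-- The formal powers φ_k associated with f. -/
noncomputable def phiFP (f : ℝ → ℂ) (k : ℕ) (x : ℝ) : ℂ :=
  if Odd k then f x * Xrec f k x else f x * Xtrec f k x

/-- The formal powers ψ_k associated with f. -/
noncomputable def psiFP (f : ℝ → ℂ) (k : ℕ) (x : ℝ) : ℂ :=
  if Odd k then Xtrec f k x / f x else Xrec f k x / f x

/-- FTC for the primitive of a function continuous on `Icc 0 b`. -/
lemma hasDeriv_primitive {b : ℝ} {g : ℝ → ℂ} (hg : ContinuousOn g (Set.Icc 0 b))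
    {x : ℝ} (hx : x ∈ Set.Icc (0:ℝ) b) :
    HasDerivWithinAt (fun u => ∫ s in (0:ℝ)..u, g s) (g x) (Set.Icc 0 b) x := by
  haveI : Fact (x ∈ Set.Icc (0:ℝ) b) := ⟨hx⟩
  apply intervalIntegral.integral_hasDerivWithinAt_right (t := Set.Icc 0 b)
  · apply ContinuousOn.intervalIntegrable
    apply hg.mono
    rw [Set.uIcc_of_le hx.1]
    exact Set.Icc_subset_Icc le_rfl hx.2
  · exact ⟨Set.Icc 0 b, self_mem_nhdsWithin,
      (hg.aestronglyMeasurable measurableSet_Icc)⟩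
  · exact hg x hx

lemma cont_zpow_sq {b : ℝ} {f : ℝ → ℂ} (hfc : ContinuousOn f (Set.Icc 0 b))
    (hfne : ∀ x ∈ Set.Icc (0:ℝ) b, f x ≠ 0) (m : ℤ) :
    ContinuousOn (fun s => (f s ^ 2) ^ m) (Set.Icc 0 b) :=
  (hfc.pow 2).zpow₀ m (fun a ha => Or.inl (pow_ne_zero 2 (hfne a ha)))

lemma contOn_Xrec {b : ℝ} {f : ℝ → ℂ} (hfc : ContinuousOn f (Set.Icc 0 b))
    (hfne : ∀ x ∈ Set.Icc (0:ℝ) b, f x ≠ 0) :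
    ∀ n, ContinuousOn (Xrec f n) (Set.Icc 0 b) := by
  intro n
  induction n with
  | zero => exact continuousOn_const
  | succ n ih =>
    show ContinuousOn (fun x => (n + 1 : ℂ) *
      ∫ s in (0:ℝ)..x, Xrec f n s * ((f s ^ 2) ^ ((-1 : ℤ) ^ (n + 1)))) _
    apply continuousOn_const.mul
    intro x hx
    exact (hasDeriv_primitive (ih.mul (cont_zpow_sq hfc hfne _)) hx).continuousWithinAt

lemma contOn_Xtrec {b : ℝ} {f : ℝ → ℂ} (hfc : ContinuousOn f (Set.Icc 0 b))
    (hfne : ∀ x ∈ Set.Icc (0:ℝ) b, f x ≠ 0) :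
    ∀ n, ContinuousOn (Xtrec f n) (Set.Icc 0 b) := by
  intro n
  induction n with
  | zero => exact continuousOn_const
  | succ n ih =>
    show ContinuousOn (fun x => (n + 1 : ℂ) *
      ∫ s in (0:ℝ)..x, Xtrec f n s * ((f s ^ 2) ^ ((-1 : ℤ) ^ n))) _
    apply continuousOn_const.mul
    intro x hx
    exact (hasDeriv_primitive (ih.mul (cont_zpow_sq hfc hfne _)) hx).continuousWithinAt

lemma hasDeriv_Xrec {b : ℝ} {f : ℝ → ℂ} (hfc : ContinuousOn f (Set.Icc 0 b))
    (hfne : ∀ x ∈ Set.Icc (0:ℝ) b, f x ≠ 0) (n : ℕ) {x : ℝ} (hx : x ∈ Set.Icc (0:ℝ) b) :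
    HasDerivWithinAt (Xrec f (n + 1))
      ((n + 1 : ℂ) * (Xrec f n x * ((f x ^ 2) ^ ((-1 : ℤ) ^ (n + 1)))))
      (Set.Icc 0 b) x := by
  have := (hasDeriv_primitive ((contOn_Xrec hfc hfne n).mul
    (cont_zpow_sq hfc hfne ((-1 : ℤ) ^ (n + 1)))) hx).const_mul ((n : ℂ) + 1)
  convert this using 2 <;> rfl

lemma hasDeriv_Xtrec {b : ℝ} {f : ℝ → ℂ} (hfc : ContinuousOn f (Set.Icc 0 b))
    (hfne : ∀ x ∈ Set.Icc (0:ℝ) b, f x ≠ 0) (n : ℕ) {x : ℝ} (hx : x ∈ Set.Icc (0:ℝ) b) :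
    HasDerivWithinAt (Xtrec f (n + 1))
      ((n + 1 : ℂ) * (Xtrec f n x * ((f x ^ 2) ^ ((-1 : ℤ) ^ n))))
      (Set.Icc 0 b) x := by
  have := (hasDeriv_primitive ((contOn_Xtrec hfc hfne n).mul
    (cont_zpow_sq hfc hfne ((-1 : ℤ) ^ n))) hx).const_mul ((n : ℂ) + 1)
  convert this using 2 <;> rfl

theorem formal_power_derivative (b : ℝ) (hb : 0 < b) (q f f' f'' : ℝ → ℂ)
    (hq : ContinuousOn q (Set.Icc 0 b))
    (hf : ∀ x ∈ Set.Icc (0:ℝ) b, HasDerivWithinAt f (f' x) (Set.Icc 0 b) x)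
    (hf' : ∀ x ∈ Set.Icc (0:ℝ) b, HasDerivWithinAt f' (f'' x) (Set.Icc 0 b) x)
    (hf'' : ContinuousOn f'' (Set.Icc 0 b))
    (hODE : ∀ x ∈ Set.Icc (0:ℝ) b, f'' x = q x * f x)
    (hf0 : f 0 = 1) (hfne : ∀ x ∈ Set.Icc (0:ℝ) b, f x ≠ 0) :
    ∀ k : ℕ, 1 ≤ k → ∀ x ∈ Set.Icc (0:ℝ) b,
      HasDerivWithinAt (phiFP f k)
        ((k : ℂ) * psiFP f (k - 1) x + (f' x / f x) * phiFP f k x)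
        (Set.Icc 0 b) x := by
  have hfc : ContinuousOn f (Set.Icc 0 b) := fun x hx => (hf x hx).continuousWithinAt
  intro k hk x hx
  have hfx := hfne x hx
  obtain ⟨n, rfl⟩ : ∃ n, k = n + 1 := ⟨k - 1, (Nat.succ_pred_eq_of_pos hk).symm⟩
  simp only [Nat.add_sub_cancel]
  rcases Nat.even_or_odd (n + 1) with he | ho
  · -- n + 1 even, so n odd
    have hno : Odd n := Nat.Even.sub_odd (Nat.le_add_left 1 n) he odd_one
    have hne : ¬ Odd (n + 1) := by simpa [Nat.even_add_one] using he
    have hphi : phiFP f (n + 1) = fun y => f y * Xtrec f (n + 1) y := by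
      funext y; simp [phiFP, hne]
    rw [hphi]
    have hD := (hf x hx).mul (hasDeriv_Xtrec hfc hfne n hx)
    convert hD using 1
    · rfl
    · rfl
    have hexp : ((-1 : ℤ) ^ n) = -1 := Odd.neg_one_pow hno
    simp only [psiFP, phiFP, hno, hne, if_pos, if_neg, hexp, zpow_neg_one]
    field_simp
    push_cast
    ring
  · have hphi : phiFP f (n + 1) = fun y => f y * Xrec f (n + 1) y := by
      funext y; simp [phiFP, ho]
    rw [hphi]
    have hnno : ¬ Odd n := by
      obtain ⟨m, hm⟩ := ho
      rintro ⟨j, hj⟩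
      omega
    have hD := (hf x hx).mul (hasDeriv_Xrec hfc hfne n hx)
    convert hD using 1
    · rfl
    · rfl
    have hexp : ((-1 : ℤ) ^ (n + 1)) = -1 := Odd.neg_one_pow ho
    simp only [psiFP, phiFP, hnno, ho, if_pos, if_neg, hexp, zpow_neg_one, ↓reduceIte]
    field_simp
    push_cast
    ring
end
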